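/- arXiv:1608.00351 — 2 statements merged into one kernel-verified Lean document; each statement's English description precedes it below -/
import Mathlib

section
/- Let $A \in \mathbb{R}^{m \times n}$ have full column rank, with rows $a_1^T, \dots, a_m^T$, and let $x^*$ be the unique solution of $A x = b$. Let $\sigma_{\min}(A)$ denote the smallest singular value of $A$. If at each step a row $j$ is chosen with probability $\|a_j\|^2/\|A\|_F^2$ independently and $x_{k+1} = x_k + \frac{b_j - a_j^T x_k}{\|a_j\|^2} a_j$, then $\mathbb{E}\|x_k - x^*\|^2 \le \left(1 - \frac{\sigma_{\min}(A)^2}{\|A\|_F^2}\right)^k \|x_0 - x^*\|^2$ for all $k \ge 0$. -/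
open scoped RealInnerProductSpace

noncomputable def mulE {m n : ℕ} (M : Matrix (Fin m) (Fin n) ℝ) (v : EuclideanSpace ℝ (Fin n)) :
    EuclideanSpace ℝ (Fin m) := (WithLp.equiv 2 _).symm (M.mulVec ((WithLp.equiv 2 _) v))

noncomputable def rowE {m n : ℕ} (M : Matrix (Fin m) (Fin n) ℝ) (j : Fin m) :
    EuclideanSpace ℝ (Fin n) := (WithLp.equiv 2 _).symm (M j)

/-- The smallest singular value of `A`, as the infimum of `‖Av‖` over unit vectors. -/
noncomputable def sminE {m n : ℕ} (A : Matrix (Fin m) (Fin n) ℝ) : ℝ :=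
  ⨅ v : {v : EuclideanSpace ℝ (Fin n) // ‖v‖ = 1}, ‖mulE A (v : EuclideanSpace ℝ (Fin n))‖

lemma inner_rowE {m n : ℕ} (A : Matrix (Fin m) (Fin n) ℝ) (v : EuclideanSpace ℝ (Fin n)) (j : Fin m) :
    ⟪rowE A j, v⟫ = ∑ i, A j i * v i := by
  simp [rowE, PiLp.inner_apply, mul_comm]

lemma norm_mulE_sq {m n : ℕ} (A : Matrix (Fin m) (Fin n) ℝ) (v : EuclideanSpace ℝ (Fin n)) :
    ‖mulE A v‖ ^ 2 = ∑ j, ⟪rowE A j, v⟫ ^ 2 := by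
  rw [← real_inner_self_eq_norm_sq]
  simp only [PiLp.inner_apply, RCLike.inner_apply, starRingEnd_apply, star_trivial, inner_rowE]
  refine Finset.sum_congr rfl fun j _ => ?_
  have : (mulE A v) j = ∑ i, A j i * v i := by
    simp [mulE, Matrix.mulVec, dotProduct]
  rw [this]
  simp [rowE, mul_comm, sq]

lemma sminE_nonneg {m n : ℕ} (A : Matrix (Fin m) (Fin n) ℝ) : 0 ≤ sminE A :=
  Real.iInf_nonneg fun _ => norm_nonneg _

lemma mulE_smul {m n : ℕ} (A : Matrix (Fin m) (Fin n) ℝ) (c : ℝ) (v : EuclideanSpace ℝ (Fin n)) :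
    mulE A (c • v) = c • mulE A v := by
  simp [mulE, Matrix.mulVec_smul]

lemma sminE_mul_norm_le {m n : ℕ} (A : Matrix (Fin m) (Fin n) ℝ) (v : EuclideanSpace ℝ (Fin n)) :
    sminE A * ‖v‖ ≤ ‖mulE A v‖ := by
  rcases eq_or_ne v 0 with rfl | hv
  · simpa using norm_nonneg (mulE A 0)
  · have hnv : ‖v‖ ≠ 0 := norm_ne_zero_iff.mpr hv
    have hu : ‖(‖v‖⁻¹ • v : EuclideanSpace ℝ (Fin n))‖ = 1 := by
      rw [norm_smul, norm_inv, norm_norm, inv_mul_cancel₀ hnv]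
    have h1 : sminE A ≤ ‖mulE A (‖v‖⁻¹ • v)‖ :=
      ciInf_le ⟨0, fun x ⟨u, hu'⟩ => hu' ▸ norm_nonneg _⟩ (⟨_, hu⟩ : {v : EuclideanSpace ℝ (Fin n) // ‖v‖ = 1})
    rw [mulE_smul, norm_smul, norm_inv, norm_norm] at h1
    calc sminE A * ‖v‖ ≤ (‖v‖⁻¹ * ‖mulE A v‖) * ‖v‖ := by
          exact mul_le_mul_of_nonneg_right h1 (norm_nonneg _)
      _ = ‖mulE A v‖ := by field_simp

/-- One Kaczmarz step using row `j`. -/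
noncomputable def kacStep {m n : ℕ} (A : Matrix (Fin m) (Fin n) ℝ) (b : Fin m → ℝ)
    (j : Fin m) (x : EuclideanSpace ℝ (Fin n)) : EuclideanSpace ℝ (Fin n) :=
  x + ((b j - ⟪rowE A j, x⟫) / ‖rowE A j‖ ^ 2) • rowE A j

lemma sminE_sq_le {m n : ℕ} (A : Matrix (Fin m) (Fin n) ℝ) :
    sminE A ^ 2 ≤ ∑ l, ‖rowE A l‖ ^ 2 := by
  rcases Nat.eq_zero_or_pos n with hn | hn
  · subst hn
    have : IsEmpty {v : EuclideanSpace ℝ (Fin 0) // ‖v‖ = 1} := by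
      refine ⟨fun ⟨v, hv⟩ => ?_⟩
      have : v = 0 := Subsingleton.elim v 0
      rw [this] at hv; simp at hv
    rw [sminE, Real.iInf_of_isEmpty]
    norm_num
    exact Finset.sum_nonneg fun l _ => by positivity
  · set u : EuclideanSpace ℝ (Fin n) := EuclideanSpace.single ⟨0, hn⟩ (1 : ℝ) with hu
    have hun : ‖u‖ = 1 := by rw [hu, EuclideanSpace.norm_single]; norm_num
    have h1 : sminE A ≤ ‖mulE A u‖ :=
      ciInf_le ⟨0, fun x ⟨w, hw⟩ => hw ▸ norm_nonneg _⟩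
        (⟨u, hun⟩ : {v : EuclideanSpace ℝ (Fin n) // ‖v‖ = 1})
    have h2 : ‖mulE A u‖ ^ 2 ≤ ∑ l, ‖rowE A l‖ ^ 2 := by
      rw [norm_mulE_sq]
      refine Finset.sum_le_sum fun j _ => ?_
      have := abs_real_inner_le_norm (rowE A j) u
      calc ⟪rowE A j, u⟫ ^ 2 = |⟪rowE A j, u⟫| ^ 2 := (sq_abs _).symm
        _ ≤ (‖rowE A j‖ * ‖u‖) ^ 2 := by
            exact pow_le_pow_left₀ (abs_nonneg _) this 2
        _ = ‖rowE A j‖ ^ 2 := by rw [hun]; ring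
    calc sminE A ^ 2 ≤ ‖mulE A u‖ ^ 2 := pow_le_pow_left₀ (sminE_nonneg A) h1 2
      _ ≤ _ := h2

lemma kacStep_err {m n : ℕ} (A : Matrix (Fin m) (Fin n) ℝ) (b : Fin m → ℝ) (j : Fin m)
    (x xstar : EuclideanSpace ℝ (Fin n)) (hstar : ⟪rowE A j, xstar⟫ = b j) :
    ‖kacStep A b j x - xstar‖ ^ 2
      = ‖x - xstar‖ ^ 2 - ⟪rowE A j, x - xstar⟫ ^ 2 / ‖rowE A j‖ ^ 2 := by
  set a := rowE A j with ha
  set e := x - xstar with he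
  have hc : b j - ⟪a, x⟫ = -⟪a, e⟫ := by
    rw [he, inner_sub_right, ← hstar]; ring
  have hstep : kacStep A b j x - xstar = e + ((-⟪a, e⟫) / ‖a‖ ^ 2) • a := by
    rw [kacStep, ← ha, hc, he]
    abel
  rw [hstep]
  rcases eq_or_ne a 0 with ha0 | ha0
  · simp [ha0]
  · have hna : ‖a‖ ≠ 0 := norm_ne_zero_iff.mpr ha0
    rw [norm_add_sq_real, inner_smul_right, real_inner_comm e a, norm_smul, mul_pow]
    rw [norm_div, Real.norm_eq_abs, Real.norm_eq_abs, div_pow, sq_abs, sq_abs, ← pow_mul]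
    field_simp
    ring

lemma step_bound {m n : ℕ} (A : Matrix (Fin m) (Fin n) ℝ) (b : Fin m → ℝ)
    (xstar : EuclideanSpace ℝ (Fin n)) (hstar : ∀ j, ⟪rowE A j, xstar⟫ = b j)
    (x : EuclideanSpace ℝ (Fin n)) :
    ∑ j, (‖rowE A j‖ ^ 2 / (∑ l, ‖rowE A l‖ ^ 2)) * ‖kacStep A b j x - xstar‖ ^ 2
      ≤ (1 - sminE A ^ 2 / (∑ l, ‖rowE A l‖ ^ 2)) * ‖x - xstar‖ ^ 2 := by
  set F : ℝ := ∑ l, ‖rowE A l‖ ^ 2 with hF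
  have hF0 : 0 ≤ F := Finset.sum_nonneg fun l _ => by positivity
  rcases eq_or_lt_of_le hF0 with hF0' | hFpos
  · -- F = 0 : every row is zero
    have hrow : ∀ l : Fin m, ‖rowE A l‖ ^ 2 = 0 := by
      intro l
      have := (Finset.sum_eq_zero_iff_of_nonneg (fun l _ => by positivity)).mp hF0'.symm
      exact this l (Finset.mem_univ l)
    have hs : sminE A ^ 2 = 0 := by
      have h1 := sminE_sq_le A
      rw [← hF] at h1; rw [← hF0'] at h1
      nlinarith [sq_nonneg (sminE A)]
    rw [hs]
    have : ∀ j : Fin m, (‖rowE A j‖ ^ 2 / F) * ‖kacStep A b j x - xstar‖ ^ 2 = 0 := by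
      intro j; rw [hrow j]; simp
    rw [Finset.sum_congr rfl fun j _ => this j]
    simp
  · -- F > 0
    have hkey : ∀ j : Fin m, (‖rowE A j‖ ^ 2 / F) * ‖kacStep A b j x - xstar‖ ^ 2
        = (‖rowE A j‖ ^ 2 / F) * ‖x - xstar‖ ^ 2 - ⟪rowE A j, x - xstar⟫ ^ 2 / F := by
      intro j
      rw [kacStep_err A b j x xstar (hstar j)]
      rcases eq_or_ne (rowE A j) 0 with h0 | h0
      · simp [h0]
      · have hna : ‖rowE A j‖ ≠ 0 := norm_ne_zero_iff.mpr h0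
        field_simp
    rw [Finset.sum_congr rfl fun j _ => hkey j, Finset.sum_sub_distrib]
    rw [← Finset.sum_mul, ← Finset.sum_div, ← Finset.sum_div, ← hF, div_self (ne_of_gt hFpos),
      one_mul, ← norm_mulE_sq]
    have hAe : sminE A ^ 2 * ‖x - xstar‖ ^ 2 ≤ ‖mulE A (x - xstar)‖ ^ 2 := by
      rw [← mul_pow]
      exact pow_le_pow_left₀ (mul_nonneg (sminE_nonneg A) (norm_nonneg _))
        (sminE_mul_norm_le A (x - xstar)) 2
    have hdiv : sminE A ^ 2 * ‖x - xstar‖ ^ 2 / F ≤ ‖mulE A (x - xstar)‖ ^ 2 / F :=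
      div_le_div_of_nonneg_right hAe hFpos.le |>.trans_eq rfl
    have hr : (1 - sminE A ^ 2 / F) * ‖x - xstar‖ ^ 2
        = ‖x - xstar‖ ^ 2 - sminE A ^ 2 * ‖x - xstar‖ ^ 2 / F := by ring
    linarith

/-- The randomized Kaczmarz iterates determined by a sequence `ω` of chosen rows. -/
noncomputable def kacIter {m n : ℕ} (A : Matrix (Fin m) (Fin n) ℝ) (b : Fin m → ℝ)
    (x0 : EuclideanSpace ℝ (Fin n)) : (k : ℕ) → (Fin k → Fin m) → EuclideanSpace ℝ (Fin n)
  | 0, _ => x0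
  | (k + 1), ω => kacStep A b (ω (Fin.last k)) (kacIter A b x0 k (fun i => ω i.castSucc))

/-- Strohmer–Vershynin: exponential convergence in expectation of the randomized
Kaczmarz algorithm, rows sampled i.i.d. with probabilities `‖a_j‖²/‖A‖_F²`. -/
theorem randomized_kaczmarz_exponential_convergence {m n : ℕ}
    (A : Matrix (Fin m) (Fin n) ℝ) (b : Fin m → ℝ)
    (xstar x0 : EuclideanSpace ℝ (Fin n))
    (hrank : A.rank = n) (hstar : ∀ j, ⟪rowE A j, xstar⟫ = b j) :
    ∀ k : ℕ,
      ∑ ω : Fin k → Fin m,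
          (∏ i : Fin k, ‖rowE A (ω i)‖ ^ 2 / (∑ l : Fin m, ‖rowE A l‖ ^ 2)) *
            ‖kacIter A b x0 k ω - xstar‖ ^ 2
        ≤ (1 - sminE A ^ 2 / (∑ l : Fin m, ‖rowE A l‖ ^ 2)) ^ k * ‖x0 - xstar‖ ^ 2 := by
  intro k
  induction k with
  | zero => simp [kacIter]
  | succ k ih =>
    set F : ℝ := ∑ l : Fin m, ‖rowE A l‖ ^ 2 with hF
    have hFnn : (0 : ℝ) ≤ F := Finset.sum_nonneg fun l _ => by positivity
    have hq0 : 0 ≤ 1 - sminE A ^ 2 / F := by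
      rcases eq_or_lt_of_le hFnn with h0 | hpos
      · have hs := sminE_sq_le A
        rw [← hF, ← h0] at hs
        have hz : sminE A ^ 2 = 0 := le_antisymm hs (sq_nonneg _)
        rw [hz]; simp
      · have : sminE A ^ 2 / F ≤ 1 := by
          rw [div_le_one hpos, hF]; exact sminE_sq_le A
        linarith
    have hPnn : ∀ ω' : Fin k → Fin m, 0 ≤ ∏ i, ‖rowE A (ω' i)‖ ^ 2 / F :=
      fun ω' => Finset.prod_nonneg fun i _ => div_nonneg (by positivity) hFnn
    calc ∑ ω : Fin (k+1) → Fin m,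
            (∏ i, ‖rowE A (ω i)‖ ^ 2 / F) * ‖kacIter A b x0 (k+1) ω - xstar‖ ^ 2
        = ∑ p : Fin m × (Fin k → Fin m),
            ((∏ i : Fin k, ‖rowE A (p.2 i)‖ ^ 2 / F) * (‖rowE A p.1‖ ^ 2 / F))
              * ‖kacStep A b p.1 (kacIter A b x0 k p.2) - xstar‖ ^ 2 := by
          refine (Fintype.sum_equiv (Fin.snocEquiv fun _ => Fin m) _ _ fun p => ?_).symm
          obtain ⟨j, ω'⟩ := p
          have hω : (Fin.snocEquiv fun _ => Fin m) (j, ω') = Fin.snoc ω' j := by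
            funext i; rfl
          rw [hω]
          have h1 : kacIter A b x0 (k+1) (Fin.snoc ω' j)
              = kacStep A b j (kacIter A b x0 k ω') := by
            simp [kacIter]
          have h2 : ∏ i : Fin (k+1), ‖rowE A ((Fin.snoc ω' j : Fin (k+1) → Fin m) i)‖ ^ 2 / F
              = (∏ i : Fin k, ‖rowE A (ω' i)‖ ^ 2 / F) * (‖rowE A j‖ ^ 2 / F) := by
            rw [Fin.prod_univ_castSucc]
            simp
          rw [h1, h2]
      _ = ∑ ω' : Fin k → Fin m, (∏ i, ‖rowE A (ω' i)‖ ^ 2 / F) *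
            (∑ j : Fin m, (‖rowE A j‖ ^ 2 / F)
              * ‖kacStep A b j (kacIter A b x0 k ω') - xstar‖ ^ 2) := by
          rw [Fintype.sum_prod_type, Finset.sum_comm]
          refine Finset.sum_congr rfl fun ω' _ => ?_
          rw [Finset.mul_sum]
          exact Finset.sum_congr rfl fun j _ => by ring
      _ ≤ ∑ ω' : Fin k → Fin m, (∏ i, ‖rowE A (ω' i)‖ ^ 2 / F) *
            ((1 - sminE A ^ 2 / F) * ‖kacIter A b x0 k ω' - xstar‖ ^ 2) := by
          refine Finset.sum_le_sum fun ω' _ => ?_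
          exact mul_le_mul_of_nonneg_left (step_bound A b xstar hstar _) (hPnn ω')
      _ = (1 - sminE A ^ 2 / F) *
            ∑ ω' : Fin k → Fin m,
              (∏ i, ‖rowE A (ω' i)‖ ^ 2 / F) * ‖kacIter A b x0 k ω' - xstar‖ ^ 2 := by
          rw [Finset.mul_sum]
          exact Finset.sum_congr rfl fun ω' _ => by ring
      _ ≤ (1 - sminE A ^ 2 / F) * ((1 - sminE A ^ 2 / F) ^ k * ‖x0 - xstar‖ ^ 2) :=
          mul_le_mul_of_nonneg_left ih hq0
      _ = (1 - sminE A ^ 2 / F) ^ (k+1) * ‖x0 - xstar‖ ^ 2 := by ring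
end

section
/- Let $A$ have full column rank and $x^*$ solve $Ax = b$. For any $x \in \mathbb{R}^n$, $\|A(x - x^*)\|^2 \ge \sigma_{\min}(A)^2 \|x - x^*\|^2$, and consequently the one-step expected error of randomized Kaczmarz satisfies $\mathbb{E}\|x_{k+1} - x^*\|^2 \le \left(1 - \frac{\sigma_{\min}(A)^2}{\|A\|_F^2}\right)\|x_k - x^*\|^2$. -/
open scoped RealInnerProductSpace

lemma mulE_norm_sq {m n : ℕ} (A : Matrix (Fin m) (Fin n) ℝ) (v : EuclideanSpace ℝ (Fin n)) :
    ‖mulE A v‖ ^ 2 = ∑ j : Fin m, ⟪rowE A j, v⟫ ^ 2 := by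
  rw [← real_inner_self_eq_norm_sq, PiLp.inner_apply]
  simp [mulE, rowE, PiLp.inner_apply, RCLike.inner_apply, Matrix.mulVec, dotProduct, sq, mul_comm]

lemma kaczmarz_step_norm {n : ℕ} (r e : EuclideanSpace ℝ (Fin n)) :
    ‖e + (-⟪r, e⟫ / ‖r‖ ^ 2) • r‖ ^ 2 = ‖e‖ ^ 2 - ⟪r, e⟫ ^ 2 / ‖r‖ ^ 2 := by
  by_cases hr : r = 0
  · simp [hr]
  · have hrn : ‖r‖ ≠ 0 := norm_ne_zero_iff.mpr hr
    have h := norm_add_sq_real e ((-⟪r, e⟫ / ‖r‖ ^ 2) • r)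
    rw [h, inner_smul_right, norm_smul, mul_pow, Real.norm_eq_abs, sq_abs,
      real_inner_comm e r]
    field_simp
    ring

/-- The singular-value lower bound for full-column-rank `A`, and the resulting
one-step expected contraction of the randomized Kaczmarz iteration. -/
theorem rk_one_step_contraction {m n : ℕ}
    (A : Matrix (Fin m) (Fin n) ℝ) (b : Fin m → ℝ)
    (xstar xk : EuclideanSpace ℝ (Fin n))
    (hrank : A.rank = n) (hstar : ∀ j, ⟪rowE A j, xstar⟫ = b j) :
    (∀ x : EuclideanSpace ℝ (Fin n),
        ‖mulE A (x - xstar)‖ ^ 2 ≥ sminE A ^ 2 * ‖x - xstar‖ ^ 2) ∧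
    ∑ j : Fin m, (‖rowE A j‖ ^ 2 / (∑ i : Fin m, ‖rowE A i‖ ^ 2)) *
        ‖(xk + ((b j - ⟪rowE A j, xk⟫) / ‖rowE A j‖ ^ 2) • rowE A j) - xstar‖ ^ 2
      ≤ (1 - sminE A ^ 2 / (∑ i : Fin m, ‖rowE A i‖ ^ 2)) * ‖xk - xstar‖ ^ 2 := by
  have part1 : ∀ x : EuclideanSpace ℝ (Fin n),
      ‖mulE A (x - xstar)‖ ^ 2 ≥ sminE A ^ 2 * ‖x - xstar‖ ^ 2 := by
    intro x
    have h := sminE_mul_norm_le A (x - xstar)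
    have h0 : 0 ≤ sminE A * ‖x - xstar‖ := mul_nonneg (sminE_nonneg A) (norm_nonneg _)
    calc sminE A ^ 2 * ‖x - xstar‖ ^ 2 = (sminE A * ‖x - xstar‖) ^ 2 := by ring
      _ ≤ ‖mulE A (x - xstar)‖ ^ 2 := by
          exact pow_le_pow_left₀ h0 h 2
  refine ⟨part1, ?_⟩
  set e : EuclideanSpace ℝ (Fin n) := xk - xstar with he
  set S : ℝ := ∑ i : Fin m, ‖rowE A i‖ ^ 2 with hS
  -- rewrite each step norm
  have hterm : ∀ j : Fin m,
      ‖(xk + ((b j - ⟪rowE A j, xk⟫) / ‖rowE A j‖ ^ 2) • rowE A j) - xstar‖ ^ 2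
        = ‖e‖ ^ 2 - ⟪rowE A j, e⟫ ^ 2 / ‖rowE A j‖ ^ 2 := by
    intro j
    have hb : b j - ⟪rowE A j, xk⟫ = -⟪rowE A j, e⟫ := by
      rw [he, inner_sub_right, ← hstar j]; ring
    have hrearr : (xk + ((b j - ⟪rowE A j, xk⟫) / ‖rowE A j‖ ^ 2) • rowE A j) - xstar
        = e + (-⟪rowE A j, e⟫ / ‖rowE A j‖ ^ 2) • rowE A j := by
      rw [hb, he]; abel
    rw [hrearr, kaczmarz_step_norm]
  have hSnn : 0 ≤ S := Finset.sum_nonneg fun i _ => by positivity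
  rcases eq_or_lt_of_le hSnn with hS0 | hSpos
  · -- S = 0 : all rows are zero
    have hz : ∀ j : Fin m, ‖rowE A j‖ ^ 2 = 0 := by
      intro j
      have := (Finset.sum_eq_zero_iff_of_nonneg (fun i _ => by positivity)).mp hS0.symm
      exact this j (Finset.mem_univ j)
    have hlhs : ∑ j : Fin m, (‖rowE A j‖ ^ 2 / S) *
        ‖(xk + ((b j - ⟪rowE A j, xk⟫) / ‖rowE A j‖ ^ 2) • rowE A j) - xstar‖ ^ 2 = 0 := by
      apply Finset.sum_eq_zero
      intro j _
      rw [hz j]; simp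
    rw [hlhs, ← hS0]
    simp
  · -- S > 0
    have hSne : S ≠ 0 := ne_of_gt hSpos
    have hsum : ∑ j : Fin m, (‖rowE A j‖ ^ 2 / S) *
        ‖(xk + ((b j - ⟪rowE A j, xk⟫) / ‖rowE A j‖ ^ 2) • rowE A j) - xstar‖ ^ 2
        = ‖e‖ ^ 2 - (∑ j : Fin m, ⟪rowE A j, e⟫ ^ 2) / S := by
      have : ∀ j : Fin m, (‖rowE A j‖ ^ 2 / S) *
          ‖(xk + ((b j - ⟪rowE A j, xk⟫) / ‖rowE A j‖ ^ 2) • rowE A j) - xstar‖ ^ 2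
          = ‖rowE A j‖ ^ 2 * ‖e‖ ^ 2 / S - ⟪rowE A j, e⟫ ^ 2 / S := by
        intro j
        rw [hterm j]
        by_cases hr : rowE A j = 0
        · simp [hr]
        · have hrn : ‖rowE A j‖ ≠ 0 := norm_ne_zero_iff.mpr hr
          field_simp
      rw [Finset.sum_congr rfl fun j _ => this j, Finset.sum_sub_distrib,
        ← Finset.sum_div, ← Finset.sum_div, ← Finset.sum_mul, ← hS]
      congr 1
      field_simp
    rw [hsum, ← mulE_norm_sq]
    have hineq : sminE A ^ 2 * ‖e‖ ^ 2 / S ≤ ‖mulE A e‖ ^ 2 / S := by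
      gcongr
      exact part1 xk
    have : (1 - sminE A ^ 2 / S) * ‖xk - xstar‖ ^ 2
        = ‖e‖ ^ 2 - sminE A ^ 2 * ‖e‖ ^ 2 / S := by
      rw [← he]; ring
    rw [this]
    linarith
end
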